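/- There exists an infinite sequence $\{B_n\}_{n\in\mathbb{N}}$ of compact connected subsets of $\mathbb{R}^2$, all with condition number at least some fixed $\rho > 0$, such that any two members of the sequence intersect, but the sequence is not pierceable by any finite set of points. -/

import Mathlib

/-- In-radius: the radius of a largest closed ball contained in `S`. -/
noncomputable def inradius {d : ℕ} (S : Set (EuclideanSpace ℝ (Fin d))) : ℝ :=
  sSup {r : ℝ | ∃ c, Metric.closedBall c r ⊆ S}

/-- Out-radius: the radius of the smallest closed ball containing `S`. -/
noncomputable def circumradius {d : ℕ} (S : Set (EuclideanSpace ℝ (Fin d))) : ℝ :=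
  sInf {R : ℝ | 0 ≤ R ∧ ∃ c, S ⊆ Metric.closedBall c R}

/-- Condition number of a set: in-radius over out-radius. -/
noncomputable def condNumber {d : ℕ} (S : Set (EuclideanSpace ℝ (Fin d))) : ℝ :=
  inradius S / circumradius S

open Metric Set Polynomial

noncomputable def pt (x y : ℝ) : EuclideanSpace ℝ (Fin 2) :=
  (WithLp.equiv 2 (Fin 2 → ℝ)).symm ![x, y]

lemma pt_apply0 (x y : ℝ) : pt x y 0 = x := rfl
lemma pt_apply1 (x y : ℝ) : pt x y 1 = y := rfl

lemma dist_pt (x y x' y' : ℝ) :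
    dist (pt x y) (pt x' y') = Real.sqrt ((x-x')^2+(y-y')^2) := by
  rw [EuclideanSpace.dist_eq]
  simp [Fin.sum_univ_two, pt_apply0, pt_apply1, Real.dist_eq, sq_abs]

lemma seg_pt (b1 b2 c1 c2 t : ℝ) :
    (1-t) • pt b1 b2 + t • pt c1 c2 = pt ((1-t)*b1 + t*c1) ((1-t)*b2 + t*c2) := by
  ext i; fin_cases i <;> simp [pt] <;> ring

lemma coord_le_dist (p q : EuclideanSpace ℝ (Fin 2)) (i : Fin 2) : |p i - q i| ≤ dist p q := by
  rw [EuclideanSpace.dist_eq, ← Real.sqrt_sq_eq_abs]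
  apply Real.sqrt_le_sqrt
  have h : dist (p i) (q i) ^ 2 = (p i - q i)^2 := by rw [Real.dist_eq, sq_abs]
  rw [← h]
  exact Finset.single_le_sum (f := fun j => dist (p j) (q j)^2) (fun j _ => sq_nonneg _) (Finset.mem_univ i)

lemma pt_zero : pt 0 0 = 0 := by ext i; fin_cases i <;> simp [pt]

lemma norm_e : ‖pt 1 0‖ = 1 := by
  rw [← dist_zero_right, ← pt_zero, dist_pt]; norm_num

lemma add_smul_e_apply0 (c : EuclideanSpace ℝ (Fin 2)) (r : ℝ) :
    (c + r • pt 1 0) 0 = c 0 + r := by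
  simp [pt]

lemma dist_add_smul_e (c : EuclideanSpace ℝ (Fin 2)) (r : ℝ) :
    dist (c + r • pt 1 0) c = |r| := by
  rw [dist_eq_norm, add_sub_cancel_left, norm_smul, norm_e, Real.norm_eq_abs, mul_one]

lemma radius_le {c1 c2 : EuclideanSpace ℝ (Fin 2)} {r1 r2 : ℝ} (h1 : 0 ≤ r1)
    (h : closedBall c1 r1 ⊆ closedBall c2 r2) : r1 ≤ r2 := by
  have hx : c1 + r1 • pt 1 0 ∈ closedBall c1 r1 := by
    rw [mem_closedBall, dist_add_smul_e, abs_of_nonneg h1]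
  have hy : c1 + (-r1) • pt 1 0 ∈ closedBall c1 r1 := by
    rw [mem_closedBall, dist_add_smul_e, abs_neg, abs_of_nonneg h1]
  have hd : dist (c1 + r1 • pt 1 0) (c1 + (-r1) • pt 1 0) = 2 * r1 := by
    have h2 : (c1 + r1 • pt 1 0) - (c1 + (-r1) • pt 1 0) = (2*r1) • pt 1 0 := by
      rw [neg_smul, two_mul, add_smul]; abel
    rw [dist_eq_norm, h2, norm_smul, norm_e, Real.norm_eq_abs, mul_one,
      abs_of_nonneg (by linarith)]
  have t1 := h hx
  have t2 := h hy
  rw [mem_closedBall] at t1 t2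
  have := dist_triangle (c1 + r1 • pt 1 0) c2 (c1 + (-r1) • pt 1 0)
  rw [hd] at this
  rw [dist_comm] at t2
  linarith

lemma pt_congr {a b a' b' : ℝ} (ha : a = a') (hb : b = b') : pt a b = pt a' b' := by
  rw [ha, hb]

noncomputable def al (n : ℕ) : ℝ := ((n:ℝ)+1)⁻¹

lemma al_pos (n : ℕ) : 0 < al n := by unfold al; positivity

lemma al_le_one (n : ℕ) : al n ≤ 1 := by
  unfold al
  rw [inv_le_one_iff₀]
  right; push_cast; linarith [Nat.cast_nonneg (α := ℝ) n]

lemma al_inj : Function.Injective al := by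
  intro a b h
  unfold al at h
  have := inv_injective h
  have : (a:ℝ) = b := by linarith
  exact_mod_cast this

noncomputable def bpt (n : ℕ) : EuclideanSpace ℝ (Fin 2) := pt 0 (-(al n)^2)

noncomputable def cpt (n : ℕ) : EuclideanSpace ℝ (Fin 2) :=
  pt (2*(n:ℝ)+2) (2*al n*(2*(n:ℝ)+2) - al n^2)

noncomputable def BB (n : ℕ) : Set (EuclideanSpace ℝ (Fin 2)) :=
  segment ℝ (bpt n) (cpt n) ∪ closedBall (cpt n) ((n:ℝ)+1)

lemma seg_param (n : ℕ) (t : ℝ) :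
    (1-t) • bpt n + t • cpt n
      = pt (t*(2*(n:ℝ)+2)) (2*al n*(t*(2*(n:ℝ)+2)) - al n^2) := by
  rw [bpt, cpt, seg_pt]
  exact pt_congr (by ring) (by ring)

lemma BB_subset (n : ℕ) : BB n ⊆ closedBall (cpt n) (6*(n:ℝ)+6) := by
  rintro z (hz | hz)
  · rw [segment_eq_image] at hz
    obtain ⟨t, ⟨ht0, ht1⟩, rfl⟩ := hz
    show dist ((1-t) • bpt n + t • cpt n) (cpt n) ≤ 6*(n:ℝ)+6
    rw [seg_param, cpt, dist_pt]
    have hn : (0:ℝ) ≤ (n:ℝ) := Nat.cast_nonneg n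
    have ha0 := al_pos n
    have ha1 := al_le_one n
    have e1 : (1-t)^2 ≤ 1 := by nlinarith
    have e2 : al n^2 ≤ 1 := by nlinarith
    rw [show (6*(n:ℝ)+6) = Real.sqrt ((6*(n:ℝ)+6)^2) from
      (Real.sqrt_sq (by linarith)).symm]
    apply Real.sqrt_le_sqrt
    nlinarith [mul_nonneg (sub_nonneg.2 e1) (sq_nonneg (2*(n:ℝ)+2)),
      mul_nonneg (mul_nonneg (sub_nonneg.2 e2) (sq_nonneg (1-t))) (sq_nonneg (2*(n:ℝ)+2)),
      sq_nonneg (2*(n:ℝ)+2)]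
  · exact closedBall_subset_closedBall (by linarith [Nat.cast_nonneg (α := ℝ) n]) hz

lemma cpt_mem_ball (n : ℕ) : cpt n ∈ closedBall (cpt n) ((n:ℝ)+1) :=
  mem_closedBall_self (by positivity)

lemma BB_compact (n : ℕ) : IsCompact (BB n) := by
  apply IsCompact.union
  · rw [← convexHull_pair]
    exact ((Set.finite_singleton _).insert _).isCompact_convexHull ℝ
  · exact isCompact_closedBall _ _

lemma BB_connected (n : ℕ) : IsConnected (BB n) := by
  apply IsConnected.union
  · exact ⟨cpt n, right_mem_segment ℝ _ _, cpt_mem_ball n⟩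
  · exact (convex_segment _ _).isConnected ⟨bpt n, left_mem_segment ℝ _ _⟩
  · exact (convex_closedBall _ _).isConnected ⟨cpt n, cpt_mem_ball n⟩

lemma ball_sub_BB (n : ℕ) : closedBall (cpt n) ((n:ℝ)+1) ⊆ BB n := subset_union_right

lemma inr_ge (n : ℕ) : (n:ℝ)+1 ≤ inradius (BB n) := by
  apply le_csSup
  · refine ⟨6*(n:ℝ)+6, fun r hr => ?_⟩
    obtain ⟨c, hc⟩ := hr
    rcases le_or_gt r 0 with h | h
    · linarith [Nat.cast_nonneg (α := ℝ) n]
    · exact radius_le h.le (hc.trans (BB_subset n))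
  · exact ⟨cpt n, ball_sub_BB n⟩

lemma cir_le (n : ℕ) : circumradius (BB n) ≤ 6*(n:ℝ)+6 := by
  apply csInf_le
  · exact ⟨0, fun R hR => hR.1⟩
  · exact ⟨by linarith [Nat.cast_nonneg (α := ℝ) n], cpt n, BB_subset n⟩

lemma cir_ge (n : ℕ) : (n:ℝ)+1 ≤ circumradius (BB n) := by
  apply le_csInf
  · exact ⟨6*(n:ℝ)+6, by linarith [Nat.cast_nonneg (α := ℝ) n], cpt n, BB_subset n⟩
  · rintro R ⟨hR0, c, hc⟩
    exact radius_le (by positivity) ((ball_sub_BB n).trans hc)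

lemma cond_ge (n : ℕ) : (1:ℝ)/6 ≤ condNumber (BB n) := by
  have h1 := inr_ge n
  have h2 := cir_le n
  have h3 := cir_ge n
  have hn : (0:ℝ) ≤ (n:ℝ) := Nat.cast_nonneg n
  have hpos : 0 < circumradius (BB n) := by linarith
  rw [condNumber, le_div_iff₀ hpos]
  linarith

lemma q_mem (m n : ℕ) : pt ((al m + al n)/2) (al m * al n) ∈ BB n := by
  left
  rw [segment_eq_image]
  have hT : (0:ℝ) < 2*(n:ℝ)+2 := by positivity
  have ham0 := al_pos m; have han0 := al_pos n
  have ham1 := al_le_one m; have han1 := al_le_one n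
  refine ⟨((al m + al n)/2)/(2*(n:ℝ)+2), ⟨by positivity, ?_⟩, ?_⟩
  · rw [div_le_one hT]; linarith
  · show (1 - _) • bpt n + _ • cpt n = _
    rw [seg_param]
    have hx : ((al m + al n)/2)/(2*(n:ℝ)+2)*(2*(n:ℝ)+2) = (al m + al n)/2 :=
      div_mul_cancel₀ _ hT.ne'
    rw [hx]
    exact pt_congr rfl (by ring)

lemma BB_inter (m n : ℕ) : (BB m ∩ BB n).Nonempty := by
  refine ⟨pt ((al m + al n)/2) (al m * al n), ?_, q_mem m n⟩
  have := q_mem n m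
  rwa [show (al n + al m)/2 = (al m + al n)/2 by ring, mul_comm (al n)] at this

lemma coord_bound {n : ℕ} {z : EuclideanSpace ℝ (Fin 2)} (hz : z ∈ BB n) :
    z 0 ≤ 3*(n:ℝ)+3 := by
  rcases hz with hz | hz
  · rw [segment_eq_image] at hz
    obtain ⟨t, ⟨ht0, ht1⟩, rfl⟩ := hz
    show ((1-t) • bpt n + t • cpt n) 0 ≤ 3*(n:ℝ)+3
    rw [seg_param, pt_apply0]
    have hn : (0:ℝ) ≤ (n:ℝ) := Nat.cast_nonneg n
    nlinarith
  · have := (abs_le.1 (coord_le_dist z (cpt n) 0)).2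
    rw [mem_closedBall] at hz
    have hc : cpt n 0 = 2*(n:ℝ)+2 := rfl
    linarith

lemma BB_inj : Function.Injective BB := by
  have key : ∀ m n : ℕ, BB m = BB n → (n:ℝ) ≤ (m:ℝ) := by
    intro m n h
    have hmem : cpt n + ((n:ℝ)+1) • pt 1 0 ∈ BB n := by
      apply ball_sub_BB
      rw [mem_closedBall, dist_add_smul_e, abs_of_nonneg (by positivity)]
    rw [← h] at hmem
    have := coord_bound hmem
    rw [add_smul_e_apply0] at this
    have hc : cpt n 0 = 2*(n:ℝ)+2 := rfl
    rw [hc] at this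
    linarith
  intro m n h
  have h1 := key m n h
  have h2 := key n m h.symm
  exact_mod_cast le_antisymm h2 h1

lemma fiber_finite (p : EuclideanSpace ℝ (Fin 2)) : {n : ℕ | p ∈ BB n}.Finite := by
  have hsub : {n : ℕ | p ∈ BB n} ⊆
      (al ⁻¹' {x : ℝ | (X^2 - C (2*(p 0)) * X + C (p 1) : ℝ[X]).IsRoot x})
        ∪ {n : ℕ | (n:ℝ) < p 0} := by
    intro n hn
    rcases hn with hn | hn
    · left
      rw [segment_eq_image] at hn
      obtain ⟨t, ⟨ht0, ht1⟩, hp⟩ := hn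
      have hp' : p = pt (t*(2*(n:ℝ)+2)) (2*al n*(t*(2*(n:ℝ)+2)) - al n^2) := by
        rw [← seg_param]; exact hp.symm
      have h0 : p 0 = t*(2*(n:ℝ)+2) := by rw [hp']; rfl
      have h1 : p 1 = 2*al n*(t*(2*(n:ℝ)+2)) - al n^2 := by rw [hp']; rfl
      show (X^2 - C (2*(p 0)) * X + C (p 1) : ℝ[X]).IsRoot (al n)
      simp only [IsRoot, eval_add, eval_sub, eval_mul, eval_pow, eval_X, eval_C]
      rw [h0, h1]; ring
    · right
      rw [mem_closedBall] at hn
      have := (abs_le.1 (coord_le_dist p (cpt n) 0)).1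
      have hc : cpt n 0 = 2*(n:ℝ)+2 := rfl
      show (n:ℝ) < p 0
      linarith
  apply Set.Finite.subset _ hsub
  apply Set.Finite.union
  · apply Set.Finite.preimage al_inj.injOn
    apply Polynomial.finite_setOf_isRoot
    intro h0
    have := congrArg (fun q : ℝ[X] => q.coeff 2) h0
    simp [coeff_X_pow] at this
  · apply Set.Finite.subset (Set.finite_lt_nat (⌈p 0⌉₊ + 1))
    intro n hn
    have : (n:ℝ) < p 0 := hn
    have := Nat.lt_ceil.2 this
    exact Set.mem_setOf.2 (by omega)

theorem stmt9 :
    ∃ ρ : ℝ, 0 < ρ ∧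
      ∃ B : ℕ → Set (EuclideanSpace ℝ (Fin 2)),
        Function.Injective B ∧
        (∀ n, IsCompact (B n) ∧ IsConnected (B n) ∧ ρ ≤ condNumber (B n)) ∧
        (∀ m n, (B m ∩ B n).Nonempty) ∧
        ¬ ∃ P : Set (EuclideanSpace ℝ (Fin 2)), P.Finite ∧ ∀ n, ∃ p ∈ P, p ∈ B n := by

  refine ⟨1/6, by norm_num, BB, BB_inj, fun n => ⟨BB_compact n, BB_connected n, cond_ge n⟩,
    BB_inter, ?_⟩
  rintro ⟨P, hPfin, hP⟩
  have hNfin : (⋃ p ∈ P, {n : ℕ | p ∈ BB n}).Finite :=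
    hPfin.biUnion (fun p _ => fiber_finite p)
  obtain ⟨n, hn⟩ := hNfin.infinite_compl.nonempty
  obtain ⟨p, hpP, hpB⟩ := hP n
  exact hn (Set.mem_biUnion hpP hpB)
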